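/- Let M be the normalized adjacency matrix of an unambiguous automaton, and suppose there is a constant K with (M^n)_{p,q} ≤ K·λ^n for all n and states p,q, where λ < 1. Then for all sufficiently large n there exists a word of length n over A that does not label any run in the automaton; consequently the automaton accepts no normal sequence. -/

import Mathlib

open Matrix BigOperators Filter

/-- A run of length `n` from `p` to `q` labeled by the word `w`. -/
def IsRun {Q A : Type*} (Δ : Q → A → Q → Prop) {n : ℕ} (w : Fin n → A)
    (p q : Q) (s : Fin (n + 1) → Q) : Prop :=
  s 0 = p ∧ s (Fin.last n) = q ∧ ∀ i : Fin n, Δ (s i.castSucc) (w i) (s i.succ)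

/-- Number of occurrences of the word `w` starting in the first `n` positions of `x`. -/
def occCount {A : Type*} [DecidableEq A] (x : ℕ → A) (w : List A) (n : ℕ) : ℕ :=
  ((Finset.range n).filter (fun i => ∀ j : Fin w.length, x (i + j) = w.get j)).card

/-- A sequence is normal if every nonempty finite word occurs with limiting
frequency `(#A)^{-|w|}`. -/
def IsNormal {A : Type*} [Fintype A] [DecidableEq A] (x : ℕ → A) : Prop :=
  ∀ w : List A, w ≠ [] →
    Filter.Tendsto (fun n => (occCount x w n : ℝ) / n) Filter.atTop
      (nhds (1 / (Fintype.card A : ℝ) ^ w.length))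

section Aux

variable {Q A : Type*} [Fintype Q] [DecidableEq Q] [Fintype A] [DecidableEq A]
  (Δ : Q → A → Q → Prop) [∀ p a q, Decidable (Δ p a q)]

instance instDecIsRun {n : ℕ} (w : Fin n → A) (p q : Q) (s : Fin (n + 1) → Q) :
    Decidable (IsRun Δ w p q s) := by
  unfold IsRun; infer_instance

/-- Pairs (word, run) of length `n` from `p` to `q`. -/
def runPairs (n : ℕ) (p q : Q) : Finset ((Fin n → A) × (Fin (n + 1) → Q)) :=
  Finset.univ.filter (fun ws => IsRun Δ ws.1 p q ws.2)

lemma runPairs_card_le [Nonempty A] (M : Matrix Q Q ℝ)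
    (hM : ∀ p q, M p q =
      ((Finset.univ.filter (fun a : A => Δ p a q)).card : ℝ) / Fintype.card A) :
    ∀ (n : ℕ) (p q : Q),
      ((runPairs Δ n p q).card : ℝ) ≤ (Fintype.card A : ℝ) ^ n * (M ^ n) p q := by
  have hA : (0:ℝ) < (Fintype.card A : ℝ) := by
    exact_mod_cast Fintype.card_pos
  intro n
  induction n with
  | zero =>
    intro p q
    simp only [pow_zero, one_mul, pow_zero, Matrix.one_apply]
    by_cases h : p = q
    · rw [if_pos h]
      have hle : (runPairs Δ 0 p q).card ≤ 1 := by
        apply Finset.card_le_one.mpr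
        intro a ha b hb
        simp only [runPairs, Finset.mem_filter, Finset.mem_univ, true_and] at ha hb
        obtain ⟨ha0, -, -⟩ := ha
        obtain ⟨hb0, -, -⟩ := hb
        refine Prod.ext (funext fun i => i.elim0) (funext fun i => ?_)
        have hi : i = 0 := Fin.ext (Nat.lt_one_iff.mp i.isLt)
        rw [hi, ha0, hb0]
      exact_mod_cast hle
    · rw [if_neg h]
      have : runPairs Δ 0 p q = ∅ := by
        ext ws
        simp only [runPairs, Finset.mem_filter, Finset.mem_univ, true_and,
          Finset.notMem_empty, iff_false]
        rintro ⟨h0, hlast, -⟩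
        apply h
        rw [← h0, ← hlast]
        exact congrArg ws.2 (Fin.ext (by simp) : (0 : Fin 1) = Fin.last 0)
      simp [this]
  | succ n ih =>
    intro p q
    set T : Finset (Σ _ : Q, ((Fin n → A) × (Fin (n + 1) → Q)) × A) :=
      (Finset.univ : Finset Q).sigma (fun r =>
        (runPairs Δ n p r) ×ˢ (Finset.univ.filter (fun a : A => Δ r a q))) with hT
    have hcard : (runPairs Δ (n + 1) p q).card ≤ T.card := by
      apply Finset.card_le_card_of_injOn
        (fun ws => ⟨ws.2 (Fin.last n).castSucc,
          ((Fin.init ws.1, Fin.init ws.2), ws.1 (Fin.last n))⟩)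
      · intro ws hws
        simp only [Finset.mem_coe, runPairs, Finset.mem_filter, Finset.mem_univ, true_and] at hws
        obtain ⟨h0, hlast, hstep⟩ := hws
        simp only [Finset.mem_coe, hT, Finset.mem_sigma, Finset.mem_univ, Finset.mem_product,
          Finset.mem_filter, true_and, runPairs]
        refine ⟨⟨h0, rfl, fun i => ?_⟩, ?_⟩
        · simp only [Fin.init]
          rw [← Fin.succ_castSucc]
          exact hstep i.castSucc
        · have := hstep (Fin.last n)
          rwa [Fin.succ_last, hlast] at this
      · intro ws hws ws' hws' h
        simp only [runPairs, Finset.coe_filter, Set.mem_setOf_eq] at hws hws'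
        have h2 : ((Fin.init ws.1, Fin.init ws.2), ws.1 (Fin.last n)) =
            ((Fin.init ws'.1, Fin.init ws'.2), ws'.1 (Fin.last n)) :=
          eq_of_heq (Sigma.mk.inj_iff.mp h).2
        have hiw : Fin.init ws.1 = Fin.init ws'.1 := congrArg (fun z => z.1.1) h2
        have his : Fin.init ws.2 = Fin.init ws'.2 := congrArg (fun z => z.1.2) h2
        have hlw : ws.1 (Fin.last n) = ws'.1 (Fin.last n) := congrArg (fun z => z.2) h2
        have hls : ws.2 (Fin.last (n + 1)) = ws'.2 (Fin.last (n + 1)) := by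
          rw [hws.2.2.1, hws'.2.2.1]
        refine Prod.ext ?_ ?_
        · rw [← Fin.snoc_init_self ws.1, ← Fin.snoc_init_self ws'.1, hiw, hlw]
        · rw [← Fin.snoc_init_self ws.2, ← Fin.snoc_init_self ws'.2, his, hls]
    have hTcard : (T.card : ℝ) = ∑ r : Q, ((runPairs Δ n p r).card : ℝ) *
        ((Finset.univ.filter (fun a : A => Δ r a q)).card : ℝ) := by
      rw [hT, Finset.card_sigma]
      push_cast
      refine Finset.sum_congr rfl fun r _ => ?_
      rw [Finset.card_product]
      push_cast
      ring
    have hedge : ∀ r : Q, ((Finset.univ.filter (fun a : A => Δ r a q)).card : ℝ) =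
        (Fintype.card A : ℝ) * M r q := by
      intro r
      rw [hM r q]
      field_simp
    calc ((runPairs Δ (n + 1) p q).card : ℝ) ≤ (T.card : ℝ) := by exact_mod_cast hcard
      _ = ∑ r : Q, ((runPairs Δ n p r).card : ℝ) *
          ((Finset.univ.filter (fun a : A => Δ r a q)).card : ℝ) := hTcard
      _ ≤ ∑ r : Q, ((Fintype.card A : ℝ) ^ n * (M ^ n) p r) *
          ((Fintype.card A : ℝ) * M r q) := by
        refine Finset.sum_le_sum fun r _ => ?_
        rw [hedge r]
        refine mul_le_mul_of_nonneg_right (ih p r) ?_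
        rw [← hedge r]
        exact Nat.cast_nonneg _
      _ = (Fintype.card A : ℝ) ^ (n + 1) * (M ^ (n + 1)) p q := by
        rw [pow_succ M, Matrix.mul_apply, Finset.mul_sum]
        refine Finset.sum_congr rfl fun r _ => ?_
        ring

end Aux

/-- If the entries of `M^n` are bounded by `K·λ^n` with `λ < 1`, then for all sufficiently
large `n` some word of length `n` labels no run; consequently the automaton accepts no
normal sequence. -/
theorem no_normal_accepted_of_small_spectral_radius {Q A : Type*}
    [Fintype Q] [DecidableEq Q] [Fintype A] [DecidableEq A] [Nonempty A]
    (Δ : Q → A → Q → Prop) [∀ p a q, Decidable (Δ p a q)]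
    (I F : Set Q)
    (hunamb : ∀ (n : ℕ) (w : Fin n → A) (p q : Q) (s s' : Fin (n + 1) → Q),
      IsRun Δ w p q s → IsRun Δ w p q s' → s = s')
    (M : Matrix Q Q ℝ)
    (hM : ∀ p q, M p q =
      ((Finset.univ.filter (fun a : A => Δ p a q)).card : ℝ) / Fintype.card A)
    (K lam : ℝ) (hlam0 : 0 ≤ lam) (hlam : lam < 1)
    (hK : ∀ (n : ℕ) (p q : Q), (M ^ n) p q ≤ K * lam ^ n) :
    (∀ᶠ n in atTop, ∃ w : Fin n → A, ∀ (p q : Q) (s : Fin (n + 1) → Q), ¬ IsRun Δ w p q s) ∧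
    ∀ x : ℕ → A, IsNormal x →
      ¬ ∃ s : ℕ → Q, s 0 ∈ I ∧ (∀ i, Δ (s i) (x i) (s (i + 1))) ∧
        ∀ m, ∃ k, m ≤ k ∧ s k ∈ F := by
  have hA : (0:ℝ) < (Fintype.card A : ℝ) := by exact_mod_cast Fintype.card_pos
  -- Part 1: eventually some word labels no run
  have part1 : ∀ᶠ n in atTop, ∃ w : Fin n → A,
      ∀ (p q : Q) (s : Fin (n + 1) → Q), ¬ IsRun Δ w p q s := by
    cases isEmpty_or_nonempty Q with
    | inl hQ =>
      refine Filter.Eventually.of_forall fun n => ?_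
      exact ⟨fun _ => Classical.arbitrary A, fun p q s _ => (hQ.false p).elim⟩
    | inr hQ =>
      have htend : Tendsto (fun n : ℕ => (Fintype.card Q : ℝ) ^ 2 * K * lam ^ n)
          atTop (nhds 0) := by
        have := (tendsto_pow_atTop_nhds_zero_of_lt_one hlam0 hlam).const_mul
          ((Fintype.card Q : ℝ) ^ 2 * K)
        simpa using this
      have hev := htend.eventually_lt_const one_pos
      filter_upwards [hev] with n hn
      by_contra hcon
      push_neg at hcon
      choose p q s hrun using hcon
      -- inject all words into the union of runPairs
      set T : Finset (Σ _ : Q × Q, (Fin n → A) × (Fin (n + 1) → Q)) :=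
        (Finset.univ : Finset (Q × Q)).sigma (fun pq => runPairs Δ n pq.1 pq.2) with hT
      have hcard : (Finset.univ : Finset (Fin n → A)).card ≤ T.card := by
        apply Finset.card_le_card_of_injOn (fun w => ⟨(p w, q w), (w, s w)⟩)
        · intro w _
          simp only [Finset.mem_coe, hT, Finset.mem_sigma, Finset.mem_univ, true_and, runPairs,
            Finset.mem_filter]
          exact hrun w
        · intro w _ w' _ h
          have h2 : (w, s w) = (w', s w') := eq_of_heq (Sigma.mk.inj_iff.mp h).2
          exact congrArg Prod.fst h2
      have hlhs : ((Finset.univ : Finset (Fin n → A)).card : ℝ) = (Fintype.card A : ℝ) ^ n := by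
        rw [Finset.card_univ, Fintype.card_fun]
        push_cast
        simp
      have hrhs : (T.card : ℝ) ≤ (Fintype.card Q : ℝ) ^ 2 * K * lam ^ n *
          (Fintype.card A : ℝ) ^ n := by
        rw [hT, Finset.card_sigma]
        push_cast
        calc (∑ pq : Q × Q, ((runPairs Δ n pq.1 pq.2).card : ℝ))
            ≤ ∑ _pq : Q × Q, (Fintype.card A : ℝ) ^ n * (K * lam ^ n) := by
              refine Finset.sum_le_sum fun pq _ => ?_
              refine le_trans (runPairs_card_le Δ M hM n pq.1 pq.2) ?_
              exact mul_le_mul_of_nonneg_left (hK n pq.1 pq.2) (by positivity)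
          _ = (Fintype.card Q : ℝ) ^ 2 * K * lam ^ n * (Fintype.card A : ℝ) ^ n := by
              rw [Finset.sum_const, Finset.card_univ, Fintype.card_prod]
              push_cast
              ring
      have : (Fintype.card A : ℝ) ^ n ≤ (Fintype.card Q : ℝ) ^ 2 * K * lam ^ n *
          (Fintype.card A : ℝ) ^ n := by
        have hc : ((Finset.univ : Finset (Fin n → A)).card : ℝ) ≤ (T.card : ℝ) := by
          exact_mod_cast hcard
        rw [hlhs] at hc
        exact le_trans hc hrhs
      have hApow : (0:ℝ) < (Fintype.card A : ℝ) ^ n := by positivity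
      have h1 : (1:ℝ) ≤ (Fintype.card Q : ℝ) ^ 2 * K * lam ^ n := by
        nlinarith
      linarith
  refine ⟨part1, ?_⟩
  -- Part 2
  rintro x hx ⟨s, _hI, hstep, _hF⟩
  obtain ⟨N, hN⟩ := Filter.eventually_atTop.mp part1
  set n := N + 1 with hn
  obtain ⟨w, hw⟩ := hN n (Nat.le_succ N)
  set wl := List.ofFn w with hwl
  have hwlen : wl.length = n := by simp [hwl, hn]
  have hwlne : wl ≠ [] := by
    intro h
    rw [h] at hwlen
    simp [hn] at hwlen
  have hnorm := hx wl hwlne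
  have hpos : (0:ℝ) < 1 / (Fintype.card A : ℝ) ^ wl.length := by positivity
  have hev2 := hnorm.eventually_const_lt hpos
  obtain ⟨k, hk⟩ := hev2.exists
  have hocc : occCount x wl k ≠ 0 := by
    intro h
    rw [h] at hk
    norm_num at hk
  have hne : ((Finset.range k).filter
      (fun i => ∀ j : Fin wl.length, x (i + j) = wl.get j)).Nonempty := by
    rw [← Finset.card_pos]
    exact Nat.pos_of_ne_zero hocc
  obtain ⟨i, hi⟩ := hne
  rw [Finset.mem_filter] at hi
  have hocc2 : ∀ j : Fin wl.length, x (i + j) = wl.get j := hi.2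
  have hxw : ∀ j : Fin n, x (i + j) = w j := by
    intro j
    have hj : (j : ℕ) < wl.length := by rw [hwlen]; exact j.isLt
    have := hocc2 ⟨j, hj⟩
    rw [List.get_ofFn] at this
    simpa using this
  apply hw (s i) (s (i + n)) (fun j : Fin (n + 1) => s (i + j))
  refine ⟨by simp, by simp [Fin.last], fun j => ?_⟩
  have h1 : ((j.castSucc : Fin (n + 1)) : ℕ) = (j : ℕ) := rfl
  have h2 : ((j.succ : Fin (n + 1)) : ℕ) = (j : ℕ) + 1 := rfl
  simp only [h1, h2]
  rw [← hxw j, ← add_assoc]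
  exact hstep (i + j)
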